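/- For integers m ≥ k ≥ 1 and any 1 ≤ a_1 < a_2 < ... < a_{k+1} ≤ n, the cellular boundary of the stair convex chain satisfies ∂ stc^m_k(a_1,...,a_{k+1}) = Σ_{i=1}^{k+1} stc^m_{k−1}(a_1, ..., â_i, ..., a_{k+1}), i.e., stair convex chains behave like simplices under the boundary operator of the grid complex. -/

import Mathlib

/-- A cell of a grid complex `G[n]^m`: a list of `m` factors, each either a
vertex `{a}` (encoded `(a, false)`) or a unit interval `[a, a+1]` (encoded `(a, true)`). -/
abbrev GCell := List (ℕ × Bool)

/-- Cellular chains with `ℤ/2` coefficients. -/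
abbrev GChain := GCell →₀ ZMod 2

/-- Product of chains, induced by concatenation of cells. -/
noncomputable def prodC (α β : GChain) : GChain :=
  α.sum fun c x => β.sum fun d y => Finsupp.single (c ++ d) (x * y)

/-- The vertex `{a}` of `G[n]`, as a chain. -/
noncomputable def vtx (a : ℕ) : GChain := Finsupp.single [(a, false)] 1

/-- The unit interval `[a, a+1]` of `G[n]`, as a chain. -/
noncomputable def seg (a : ℕ) : GChain := Finsupp.single [(a, true)] 1

/-- The 1-chain `[a,b] = [a,a+1] + ... + [b-1,b]` (symmetrized so `[b,a] = [a,b]`). -/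
noncomputable def intervalC (a b : ℕ) : GChain :=
  ∑ j ∈ Finset.Ico (min a b) (max a b), seg j

/-- The diagonal vertex `(a, ..., a)` of `G[n]^m`. -/
noncomputable def diag (m a : ℕ) : GChain := Finsupp.single (List.replicate m (a, false)) 1

/-- Stair convex chains, with the list of parameters in *reverse* (decreasing) order. -/
noncomputable def stcR : ℕ → List ℕ → GChain
  | 0, [_] => Finsupp.single [] 1
  | 0, _ => 0
  | _ + 1, [] => 0
  | m + 1, [a] => prodC (stcR m [a]) (vtx a)
  | m + 1, b :: c :: rest =>
      prodC (stcR m (c :: rest)) (intervalC c b) + prodC (stcR m (b :: c :: rest)) (vtx b)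

/-- The stair convex chain `stc^m_k (a₁, ..., a_{k+1})` where the parameters are
given as the (increasing) list `l = [a₁, ..., a_{k+1}]` with `k = l.length - 1`. -/
noncomputable def stc (m : ℕ) (l : List ℕ) : GChain := stcR m l.reverse

/-- Boundary of a cell, via the product rule `∂(σ×τ) = ∂σ×τ + σ×∂τ`,
`∂{a} = 0`, `∂[a,a+1] = {a} + {a+1}`. -/
noncomputable def bndCell : GCell → GChain
  | [] => 0
  | (a, false) :: rest => prodC (vtx a) (bndCell rest)
  | (a, true) :: rest =>
      prodC (vtx a + vtx (a + 1)) (Finsupp.single rest 1) + prodC (seg a) (bndCell rest)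

/-- The boundary operator on chains, extended linearly. -/
noncomputable def bnd (α : GChain) : GChain := α.sum fun c x => x • bndCell c

/-- Ordered product of a list of chains. -/
noncomputable def bigProd (l : List GChain) : GChain := l.foldr prodC (Finsupp.single [] 1)

/-- `c` is a cell of the grid complex `G[n]^m`. -/
def isCellOf (m n : ℕ) (c : GCell) : Prop :=
  c.length = m ∧ ∀ e ∈ c, 1 ≤ e.1 ∧ (if e.2 then e.1 + 1 else e.1) ≤ n

/-- Dimension of a cell: the number of interval factors. -/
def dimCell (c : GCell) : ℕ := (c.filter fun e => e.2).length

lemma chain_add_self (γ : GChain) : γ + γ = 0 := by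
  rw [← two_smul (ZMod 2), show (2 : ZMod 2) = 0 from rfl, zero_smul]

lemma prodC_zero_left (β : GChain) : prodC 0 β = 0 := by
  simp [prodC]

lemma prodC_zero_right (α : GChain) : prodC α 0 = 0 := by
  simp [prodC]

lemma prodC_single_single (c d : GCell) (x y : ZMod 2) :
    prodC (Finsupp.single c x) (Finsupp.single d y) = Finsupp.single (c ++ d) (x * y) := by
  rcases eq_or_ne x 0 with rfl | hx
  · simp [prodC]
  rcases eq_or_ne y 0 with rfl | hy
  · simp [prodC]
  rw [prodC, Finsupp.sum_single_index, Finsupp.sum_single_index] <;> simp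

lemma prodC_add_left (α β γ : GChain) : prodC (α + β) γ = prodC α γ + prodC β γ := by
  unfold prodC
  apply Finsupp.sum_add_index' <;> intros <;> simp [add_mul, Finsupp.single_add, Finsupp.sum_add]

lemma prodC_add_right (α β γ : GChain) : prodC α (β + γ) = prodC α β + prodC α γ := by
  unfold prodC
  rw [← Finsupp.sum_add]
  congr 1; funext c x
  apply Finsupp.sum_add_index' <;> intros <;> simp [mul_add, Finsupp.single_add]

lemma prodC_sum_left {ι : Type*} (s : Finset ι) (f : ι → GChain) (γ : GChain) :
    prodC (∑ i ∈ s, f i) γ = ∑ i ∈ s, prodC (f i) γ := by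
  classical
  induction s using Finset.induction with
  | empty => simp [prodC_zero_left]
  | insert _ _ h ih => simp [Finset.sum_insert h, prodC_add_left, ih]

lemma prodC_sum_right {ι : Type*} (s : Finset ι) (f : ι → GChain) (γ : GChain) :
    prodC γ (∑ i ∈ s, f i) = ∑ i ∈ s, prodC γ (f i) := by
  classical
  induction s using Finset.induction with
  | empty => simp [prodC_zero_right]
  | insert _ _ h ih => simp [Finset.sum_insert h, prodC_add_right, ih]

lemma prodC_smul_left (x : ZMod 2) (α β : GChain) : prodC (x • α) β = x • prodC α β := by
  induction α using Finsupp.induction_linear with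
  | zero => simp [prodC_zero_left]
  | add a b ha hb => simp [smul_add, prodC_add_left, ha, hb]
  | single c y =>
    induction β using Finsupp.induction_linear with
    | zero => simp [prodC_zero_right]
    | add a b ha hb => rw [prodC_add_right, ha, hb, ← smul_add, prodC_add_right]
    | single d z =>
      rw [Finsupp.smul_single, prodC_single_single, prodC_single_single,
        Finsupp.smul_single, smul_eq_mul, smul_eq_mul, mul_assoc]

lemma prodC_smul_right (x : ZMod 2) (α β : GChain) : prodC α (x • β) = x • prodC α β := by
  induction α using Finsupp.induction_linear with
  | zero => simp [prodC_zero_left]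
  | add a b ha hb => simp [prodC_add_left, smul_add, ha, hb]
  | single c y =>
    induction β using Finsupp.induction_linear with
    | zero => simp [prodC_zero_right]
    | add a b ha hb =>
      rw [smul_add, prodC_add_right, ha, hb, ← smul_add, prodC_add_right]
    | single d z =>
      rw [Finsupp.smul_single, prodC_single_single, prodC_single_single,
        Finsupp.smul_single, smul_eq_mul, smul_eq_mul, mul_left_comm]

lemma prodC_empty_left (γ : GChain) : prodC (Finsupp.single [] 1) γ = γ := by
  rw [prodC, Finsupp.sum_single_index] <;> simp

lemma prodC_empty_right (γ : GChain) : prodC γ (Finsupp.single [] 1) = γ := by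
  rw [prodC]
  conv_rhs => rw [← Finsupp.sum_single γ]
  congr 1; funext c x
  rw [Finsupp.sum_single_index] <;> simp

lemma prodC_assoc (α β γ : GChain) : prodC (prodC α β) γ = prodC α (prodC β γ) := by
  induction α using Finsupp.induction_linear with
  | zero => simp [prodC_zero_left]
  | add a b ha hb => simp [prodC_add_left, ha, hb]
  | single c x =>
    induction β using Finsupp.induction_linear with
    | zero => simp [prodC_zero_left, prodC_zero_right]
    | add a b ha hb => simp [prodC_add_left, prodC_add_right, ha, hb]
    | single d y =>
      induction γ using Finsupp.induction_linear with
      | zero => simp [prodC_zero_right]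
      | add a b ha hb => simp [prodC_add_right, ha, hb]
      | single e z =>
        rw [prodC_single_single, prodC_single_single, prodC_single_single,
          prodC_single_single, mul_assoc, List.append_assoc]

lemma bnd_zero : bnd 0 = 0 := by simp [bnd]

lemma bnd_single (c : GCell) (x : ZMod 2) : bnd (Finsupp.single c x) = x • bndCell c := by
  rcases eq_or_ne x 0 with rfl | hx
  · simp [bnd]
  · rw [bnd, Finsupp.sum_single_index]; simp

lemma bnd_add (α β : GChain) : bnd (α + β) = bnd α + bnd β := by
  unfold bnd
  apply Finsupp.sum_add_index' <;> intros <;> simp [add_smul]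

lemma bnd_smul (x : ZMod 2) (α : GChain) : bnd (x • α) = x • bnd α := by
  induction α using Finsupp.induction_linear with
  | zero => simp [bnd_zero]
  | add a b ha hb => rw [smul_add, bnd_add, ha, hb, bnd_add, smul_add]
  | single c y => rw [Finsupp.smul_single, bnd_single, bnd_single, smul_smul, smul_eq_mul]

lemma bnd_sum {ι : Type*} (s : Finset ι) (f : ι → GChain) :
    bnd (∑ i ∈ s, f i) = ∑ i ∈ s, bnd (f i) := by
  classical
  induction s using Finset.induction with
  | empty => simp [bnd_zero]
  | insert _ _ h ih => simp [Finset.sum_insert h, bnd_add, ih]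

lemma single_cons (a : ℕ) (b : Bool) (c : GCell) :
    Finsupp.single ((a, b) :: c) (1 : ZMod 2)
      = prodC (Finsupp.single [(a, b)] 1) (Finsupp.single c 1) := by
  rw [prodC_single_single]; simp

lemma bndCell_append (c d : GCell) :
    bndCell (c ++ d) = prodC (bndCell c) (Finsupp.single d 1)
      + prodC (Finsupp.single c 1) (bndCell d) := by
  induction c with
  | nil => rw [List.nil_append, bndCell, prodC_zero_left, zero_add, prodC_empty_left]
  | cons e c ih =>
    obtain ⟨a, b⟩ := e
    cases b
    · rw [List.cons_append, bndCell, bndCell, ih]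
      simp only [prodC_add_left, prodC_add_right, prodC_assoc, single_cons,
        show Finsupp.single [(a, false)] (1 : ZMod 2) = vtx a from rfl]
    · rw [List.cons_append, bndCell, bndCell, ih]
      simp only [prodC_add_left, prodC_add_right, prodC_assoc, single_cons,
        show Finsupp.single (c ++ d) (1 : ZMod 2)
          = prodC (Finsupp.single c 1) (Finsupp.single d 1) from by
            rw [prodC_single_single]; simp,
        show Finsupp.single [(a, true)] (1 : ZMod 2) = seg a from rfl]
      abel

lemma bnd_prodC (α β : GChain) :
    bnd (prodC α β) = prodC (bnd α) β + prodC α (bnd β) := by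
  induction α using Finsupp.induction_linear with
  | zero => simp [prodC_zero_left, bnd_zero]
  | add a b ha hb =>
    rw [prodC_add_left, bnd_add, ha, hb, bnd_add, prodC_add_left, prodC_add_left]
    abel
  | single c x =>
    induction β using Finsupp.induction_linear with
    | zero => simp [prodC_zero_right, bnd_zero]
    | add a b ha hb =>
      rw [prodC_add_right, bnd_add, ha, hb, bnd_add, prodC_add_right, prodC_add_right]
      abel
    | single d y =>
      rw [prodC_single_single, bnd_single, bnd_single, bnd_single, bndCell_append, smul_add]
      rw [show (Finsupp.single d y : GChain) = y • Finsupp.single d 1 from by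
          rw [Finsupp.smul_single, smul_eq_mul, mul_one],
        show (Finsupp.single c x : GChain) = x • Finsupp.single c 1 from by
          rw [Finsupp.smul_single, smul_eq_mul, mul_one]]
      simp only [prodC_smul_left, prodC_smul_right, smul_smul, smul_eq_mul, mul_comm y x]

lemma bnd_vtx (a : ℕ) : bnd (vtx a) = 0 := by
  rw [vtx, bnd_single, bndCell, bndCell, prodC_zero_right, smul_zero]

lemma bnd_seg (a : ℕ) : bnd (seg a) = vtx a + vtx (a + 1) := by
  rw [seg, bnd_single, bndCell, bndCell, prodC_zero_right, add_zero, prodC_empty_right,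
    one_smul]

lemma bnd_intervalC_le {a b : ℕ} (h : a ≤ b) : bnd (intervalC a b) = vtx a + vtx b := by
  induction b, h using Nat.le_induction with
  | base =>
    rw [intervalC]
    simp [bnd_zero, chain_add_self]
  | succ b hb ih =>
    rw [intervalC, min_eq_left (hb.trans b.le_succ), max_eq_right (hb.trans b.le_succ),
      Finset.sum_Ico_succ_top hb, bnd_add, bnd_seg]
    rw [intervalC, min_eq_left hb, max_eq_right hb] at ih
    rw [ih, add_assoc, ← add_assoc (vtx b), chain_add_self, zero_add]

lemma bnd_intervalC (a b : ℕ) : bnd (intervalC a b) = vtx a + vtx b := by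
  rcases le_total a b with h | h
  · exact bnd_intervalC_le h
  · rw [intervalC, min_comm, max_comm, ← intervalC, bnd_intervalC_le h, add_comm]

lemma intervalC_glue {a b c : ℕ} (hab : a ≤ b) (hbc : b ≤ c) :
    intervalC a b + intervalC b c = intervalC a c := by
  rw [intervalC, intervalC, intervalC, min_eq_left hab, max_eq_right hab,
    min_eq_left hbc, max_eq_right hbc, min_eq_left (hab.trans hbc),
    max_eq_right (hab.trans hbc), Finset.sum_Ico_consecutive _ hab hbc]

lemma two_zsmul_chain (γ : GChain) : (2 : ℤ) • γ = 0 := by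
  rw [two_zsmul]; exact chain_add_self γ

lemma two_nsmul_chain (γ : GChain) : (2 : ℕ) • γ = 0 := by
  rw [two_nsmul]; exact chain_add_self γ

lemma stcR_zero_two (l : List ℕ) (h : 2 ≤ l.length) : stcR 0 l = 0 := by
  match l, h with | a :: b :: rest, _ => rfl

lemma stcR_single (m a : ℕ) : stcR (m + 1) [a] = prodC (stcR m [a]) (vtx a) := rfl

lemma stcR_cons₂ (m b c : ℕ) (rest : List ℕ) :
    stcR (m + 1) (b :: c :: rest)
      = prodC (stcR m (c :: rest)) (intervalC c b)
        + prodC (stcR m (b :: c :: rest)) (vtx b) := rfl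

lemma bnd_stcR_single (m a : ℕ) : bnd (stcR m [a]) = 0 := by
  induction m with
  | zero =>
    rw [show stcR 0 [a] = Finsupp.single [] 1 from rfl, bnd_single,
      show bndCell [] = 0 from rfl, smul_zero]
  | succ m ih =>
    rw [stcR_single, bnd_prodC, ih, bnd_vtx, prodC_zero_left, prodC_zero_right, add_zero]

lemma bnd_stcR (m : ℕ) : ∀ l : List ℕ, 2 ≤ l.length → l.Chain' (· ≥ ·) →
    bnd (stcR m l) = ∑ i ∈ Finset.range l.length, stcR m (l.eraseIdx i) := by
  induction m with
  | zero =>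
    rintro (_ | ⟨a, _ | ⟨b, rest⟩⟩) h hc
    · simp at h
    · simp at h
    · rw [stcR_zero_two _ h, bnd_zero]
      cases rest with
      | nil =>
        rw [show ([a, b] : List ℕ).length = 2 from rfl, Finset.sum_range_succ,
          Finset.sum_range_succ, Finset.sum_range_zero]
        simp only [List.eraseIdx_cons_zero, List.eraseIdx_cons_succ, List.eraseIdx_nil]
        rw [show stcR 0 [b] = Finsupp.single [] 1 from rfl,
          show stcR 0 [a] = Finsupp.single [] 1 from rfl, zero_add, chain_add_self]
      | cons c rest' =>
        symm; apply Finset.sum_eq_zero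
        intro i hi
        apply stcR_zero_two
        have h3 := Finset.mem_range.mp hi
        simp only [List.length_cons] at h3
        rw [List.length_eraseIdx, if_pos (by simp only [List.length_cons]; omega)]
        simp only [List.length_cons]
        omega
  | succ m IH =>
    rintro (_ | ⟨b, _ | ⟨c, rest⟩⟩) h hc
    · simp at h
    · simp at h
    · rw [stcR_cons₂, bnd_add, bnd_prodC, bnd_prodC, bnd_intervalC, bnd_vtx,
        prodC_zero_right, add_zero]
      cases rest with
      | nil =>
        rw [bnd_stcR_single, prodC_zero_left, zero_add, IH [b, c] (by simp) hc,
          show ([b, c] : List ℕ).length = 2 from rfl]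
        rw [Finset.sum_range_succ, Finset.sum_range_succ, Finset.sum_range_zero,
          Finset.sum_range_succ, Finset.sum_range_succ, Finset.sum_range_zero]
        simp only [List.eraseIdx_cons_zero, List.eraseIdx_cons_succ, List.eraseIdx_nil,
          zero_add]
        rw [stcR_single, stcR_single, prodC_add_right, prodC_add_left]
        abel_nf
        simp only [two_nsmul_chain, two_zsmul_chain, add_zero, zero_add]
      | cons d rest' =>
        obtain ⟨hbc, hc'⟩ := List.isChain_cons_cons.mp hc
        obtain ⟨hcd, -⟩ := List.isChain_cons_cons.mp hc'
        rw [IH (c :: d :: rest') (by simp) hc', IH (b :: c :: d :: rest') (by simp) hc]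
        simp only [List.length_cons, Finset.sum_range_succ', List.eraseIdx_cons_succ,
          List.eraseIdx_cons_zero]
        simp only [stcR_cons₂, prodC_add_left, prodC_add_right, prodC_sum_left,
          Finset.sum_add_distrib]
        rw [show intervalC d b = intervalC d c + intervalC c b from
          (intervalC_glue (ge_iff_le.mp hcd) (ge_iff_le.mp hbc)).symm]
        simp only [prodC_add_right]
        abel_nf
        simp only [two_nsmul_chain, two_zsmul_chain, add_zero, zero_add]

lemma reverse_eraseIdx {α : Type*} (l : List α) (i : ℕ) (h : i < l.length) :
    (l.eraseIdx i).reverse = l.reverse.eraseIdx (l.length - 1 - i) := by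
  induction l generalizing i with
  | nil => simp at h
  | cons x l ih =>
    cases i with
    | zero =>
      simp only [List.eraseIdx_cons_zero, List.reverse_cons, List.length_cons,
        Nat.sub_zero, Nat.add_sub_cancel]
      rw [List.eraseIdx_append_of_length_le (by simp)]
      simp
    | succ i =>
      have h' : i < l.length := by simpa using h
      simp only [List.eraseIdx_cons_succ, List.reverse_cons]
      rw [ih i h', List.eraseIdx_append_of_lt_length (by simp; omega)]
      congr 2
      simp only [List.length_cons]
      omega

/-- Stair convex chains behave like simplices under the boundary operator:
for `m ≥ k ≥ 1` and `1 ≤ a₁ < ... < a_{k+1} ≤ n`,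
`∂ stc^m_k(a₁,...,a_{k+1}) = Σ_{i=1}^{k+1} stc^m_{k-1}(a₁, ..., âᵢ, ..., a_{k+1})`. -/
theorem stmt5 (n m k : ℕ) (hk : 1 ≤ k) (hkm : k ≤ m)
    (a : Fin (k + 1) → ℕ) (ha : StrictMono a) (h1 : 1 ≤ a 0) (hn : a (Fin.last k) ≤ n) :
    bnd (stc m (List.ofFn a)) =
      ∑ i : Fin (k + 1), stc m ((List.ofFn a).eraseIdx i) := by
  have hlen : (List.ofFn a).length = k + 1 := List.length_ofFn
  have hchain : (List.ofFn a).reverse.Chain' (· ≥ ·) := by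
    rw [List.Chain', List.isChain_reverse]
    apply List.Pairwise.isChain
    rw [List.pairwise_ofFn]
    intro i j hij
    exact (ha hij).le
  rw [stc, bnd_stcR m _ (by rw [List.length_reverse, hlen]; omega) hchain]
  simp only [List.length_reverse, hlen, stc]
  rw [Fin.sum_univ_eq_sum_range (fun j => stcR m (((List.ofFn a).eraseIdx j).reverse)),
    ← Finset.sum_range_reflect]
  apply Finset.sum_congr rfl
  intro i hi
  have hi' : i < k + 1 := Finset.mem_range.mp hi
  rw [reverse_eraseIdx _ i (by rw [hlen]; omega), hlen]
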